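/- Every strictly positive probability distribution P on X^Λ (Λ, X finite) is Gibbsian: the family Δ_t^z(x,u) := ln(P(xz)/P(uz)) is a one-point transition energy field, and the one-point conditional probabilities of P satisfy Q_t^z(x) = exp(Δ_t^z(x,u)) / Σ_{α∈X} exp(Δ_t^z(α,u)) for every u ∈ X. -/
import Mathlib


def cat {Λ X : Type*} [DecidableEq Λ] (t : Λ) (x : X) (z : {s : Λ // s ≠ t} → X) : Λ → X :=
  fun s => if h : s = t then x else z ⟨s, h⟩

def catT {Λ X : Type*} [DecidableEq Λ] (t s : Λ) (y : X) (z : {r : Λ // r ≠ t ∧ r ≠ s} → X) :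
    {r : Λ // r ≠ t} → X :=
  fun r => if h : r.1 = s then y else z ⟨r.1, r.2, h⟩

def catS {Λ X : Type*} [DecidableEq Λ] (t s : Λ) (x : X) (z : {r : Λ // r ≠ t ∧ r ≠ s} → X) :
    {r : Λ // r ≠ s} → X :=
  fun r => if h : r.1 = t then x else z ⟨r.1, h, r.2⟩

lemma cat_comm {Λ X : Type*} [DecidableEq Λ] (t s : Λ) (hts : t ≠ s) (x y : X)
    (z : {r : Λ // r ≠ t ∧ r ≠ s} → X) :
    cat t x (catT t s y z) = cat s y (catS t s x z) := by
  funext r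
  simp only [cat, catT, catS]
  by_cases h1 : r = t
  · subst h1; simp [hts]
  · by_cases h2 : r = s
    · subst h2; simp [h1, Ne.symm hts]
    · simp [h1, h2]

theorem stmt13 {Λ X : Type*} [DecidableEq Λ] [Fintype Λ] [Fintype X]
    [Nonempty Λ] [Nonempty X]
    (P : (Λ → X) → ℝ) (hpos : ∀ σ, 0 < P σ) (hsum : ∑ σ, P σ = 1)
    (Q : ∀ t : Λ, ({s : Λ // s ≠ t} → X) → X → ℝ)
    (hQ : ∀ t z x, Q t z x = P (cat t x z) / ∑ v : X, P (cat t v z))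
    (Δ : ∀ t : Λ, ({s : Λ // s ≠ t} → X) → X → X → ℝ)
    (hΔ : ∀ t z x u, Δ t z x u = Real.log (P (cat t x z) / P (cat t u z))) :
    (∀ t : Λ, ∀ z : {s : Λ // s ≠ t} → X, ∀ x u α : X,
        Δ t z x u = Δ t z x α + Δ t z α u) ∧
    (∀ t s : Λ, t ≠ s → ∀ x u y v : X, ∀ z : {r : Λ // r ≠ t ∧ r ≠ s} → X,
        Δ t (catT t s y z) x u + Δ s (catS t s u z) y v
          = Δ s (catS t s x z) y v + Δ t (catT t s v z) x u) ∧
    (∀ t z x, ∀ u : X,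
        Q t z x = Real.exp (Δ t z x u) / ∑ α : X, Real.exp (Δ t z α u)) := by
  have hlog : ∀ (t : Λ) (z : {s : Λ // s ≠ t} → X) (x u : X),
      Δ t z x u = Real.log (P (cat t x z)) - Real.log (P (cat t u z)) := by
    intro t z x u
    rw [hΔ, Real.log_div (hpos _).ne' (hpos _).ne']
  refine ⟨?_, ?_, ?_⟩
  · intro t z x u α
    rw [hlog, hlog, hlog]; ring
  · intro t s hts x u y v z
    rw [hlog, hlog, hlog, hlog, cat_comm t s hts x y, cat_comm t s hts u y,
      cat_comm t s hts x v, cat_comm t s hts u v]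
    ring
  · intro t z x u
    have hexp : ∀ a : X, Real.exp (Δ t z a u) = P (cat t a z) / P (cat t u z) := by
      intro a
      rw [hΔ, Real.exp_log (div_pos (hpos _) (hpos _))]
    rw [hQ]
    simp only [hexp]
    rw [← Finset.sum_div]
    have hS : (∑ i : X, P (cat t i z)) ≠ 0 :=
      (Finset.sum_pos (fun i _ => hpos _) Finset.univ_nonempty).ne'
    rw [div_div_div_cancel_right₀ (hpos (cat t u z)).ne']
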